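/- arXiv:2509.14588 — 2 statements merged into one kernel-verified Lean document; each statement's English description precedes it below -/
import Mathlib

section
/- Let (P1, P2) ∈ Π(x1, y1) × Π(x2, y2) be a pair of shortest paths admitting a twin-crossing pair (a, b), and let (Q1, Q2) = φ_{a,b}(P1, P2). Then (Q1, Q2) ∈ Π(x1, y1) × Π(x2, y2), the pair (a, b) is a twin-crossing pair for (Q1, Q2), φ_{a,b}(Q1, Q2) = (P1, P2), and (Q1, Q2) ≠ (P1, P2). -/
open scoped BigOperators

namespace DSP

variable {V : Type*} [Fintype V] [DecidableEq V]

/-- A path: a nonempty list of distinct vertices in which each consecutive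
pair is joined by a directed edge. -/
def IsPath (E : V → V → Prop) (p : List V) : Prop :=
  p ≠ [] ∧ p.Nodup ∧ p.Chain' E

/-- A path from `x` to `y`. -/
def IsPathFrom (E : V → V → Prop) (p : List V) (x y : V) : Prop :=
  IsPath E p ∧ p.head? = some x ∧ p.getLast? = some y

/-- The (ordered) list of edges of a path. -/
def pathEdges (p : List V) : List (V × V) := p.zip p.tail

/-- The weight of a path: the sum of its edge weights. -/
def pathWeight (ℓ : V → V → ℝ) (p : List V) : ℝ :=
  ((pathEdges p).map fun e => ℓ e.1 e.2).sum

/-- `dist x y` : the minimum weight of a path from `x` to `y`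
(`⊤` if there is no such path). -/
noncomputable def dist (E : V → V → Prop) (ℓ : V → V → ℝ) (x y : V) : EReal :=
  sInf {w : EReal | ∃ p : List V, IsPathFrom E p x y ∧ (pathWeight ℓ p : EReal) = w}

/-- A shortest path from `x` to `y` : a path from `x` to `y` whose weight
equals `dist x y`.  `Π(x, y)` is the set of all such paths. -/
def IsShortestPath (E : V → V → Prop) (ℓ : V → V → ℝ) (p : List V) (x y : V) : Prop :=
  IsPathFrom E p x y ∧ (pathWeight ℓ p : EReal) = dist E ℓ x y

/-- A directed cycle: a closed walk with at least one edge whose internal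
vertices are pairwise distinct. -/
def IsCycle (E : V → V → Prop) (p : List V) : Prop :=
  2 ≤ p.length ∧ p.Chain' E ∧ p.head? = p.getLast? ∧ p.tail.Nodup

/-- `G` contains no directed cycle of negative or zero total weight. -/
def NoNonposCycle (E : V → V → Prop) (ℓ : V → V → ℝ) : Prop :=
  ∀ p : List V, IsCycle E p → 0 < pathWeight ℓ p

/-- `G` is a DAG: it contains no directed cycle. -/
def Acyclic (E : V → V → Prop) : Prop :=
  ∀ p : List V, ¬ IsCycle E p

/-- `x` precedes `y` on the path `p` (`x = y` allowed). -/
def Precedes (p : List V) (x y : V) : Prop :=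
  x ∈ p ∧ y ∈ p ∧ p.idxOf x ≤ p.idxOf y

/-- `subpath p x y` : the subpath `p[x, y]` of `p` from `x` to `y`
(for `x` preceding `y` on `p`). -/
def subpath (p : List V) (x y : V) : List V :=
  (p.take (p.idxOf y + 1)).drop (p.idxOf x)

/-- Concatenation `p · q` of two paths (the last vertex of `p` coinciding
with the first vertex of `q`). -/
def pathConcat (p q : List V) : List V := p ++ q.tail

/-- A vertex is internal to a path if it lies on it and is not an endpoint. -/
def Internal (p : List V) (v : V) : Prop :=
  v ∈ p ∧ p.head? ≠ some v ∧ p.getLast? ≠ some v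

/-- Paths `p1` from `x1` to `y1` and `p2` from `x2` to `y2` are internally
vertex-disjoint: they share no vertices except possibly those in
`{x1, y1} ∩ {x2, y2}`. -/
def InternallyDisjoint (p1 : List V) (x1 y1 : V) (p2 : List V) (x2 y2 : V) : Prop :=
  ∀ u, u ∈ p1 → u ∈ p2 → u ∈ ({x1, y1} ∩ {x2, y2} : Set V)

/-- `(a, b)` is a twin-crossing pair for paths `p1`, `p2`. -/
def TwinCrossingPair (p1 p2 : List V) (a b : V) : Prop :=
  a ≠ b ∧ Precedes p1 a b ∧ Precedes p2 a b ∧ subpath p1 a b ≠ subpath p2 a b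

/-- The swap operation `φ_{a,b}(P1, P2)`. -/
def swap (p1 : List V) (x1 y1 : V) (p2 : List V) (x2 y2 : V) (a b : V) :
    List V × List V :=
  (pathConcat (pathConcat (subpath p1 x1 a) (subpath p2 a b)) (subpath p1 b y1),
   pathConcat (pathConcat (subpath p2 x2 a) (subpath p1 a b)) (subpath p2 b y2))

/-- The graph with vertex `u` deleted. -/
def deleteVertex (E : V → V → Prop) (u : V) : V → V → Prop :=
  fun a b => E a b ∧ a ≠ u ∧ b ≠ u

/-- `u` is distance-critical for `(x, y)` : deleting `u` strictly increases
the distance from `x` to `y`. -/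
def DistCritical (E : V → V → Prop) (ℓ : V → V → ℝ) (x y u : V) : Prop :=
  dist E ℓ x y < dist (deleteVertex E u) ℓ x y

/-- `Δ(x, y)` : the distance-critical vertices for `(x, y)` together with the
endpoints `x`, `y`. -/
def Delta (E : V → V → Prop) (ℓ : V → V → ℝ) (x y : V) : Set V :=
  {u | DistCritical E ℓ x y u} ∪ {x, y}

/-- `δ(x, y) = |Δ(x, y)|`. -/
noncomputable def deltaCard (E : V → V → Prop) (ℓ : V → V → ℝ) (x y : V) : ℕ :=
  (Delta E ℓ x y).ncard

/-- `(a, b)` is a concordant pair for paths `p1` (from `x1` to `y1`) and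
`p2` (from `x2` to `y2`). -/
def ConcordantPair (p1 : List V) (x1 y1 : V) (p2 : List V) (x2 y2 : V) (a b : V) : Prop :=
  a ∉ ({x1, y1} ∩ {x2, y2} : Set V) ∧ b ∉ ({x1, y1} ∩ {x2, y2} : Set V) ∧
  Precedes p1 a b ∧ Precedes p2 a b ∧
  InternallyDisjoint (subpath p1 x1 a) x1 a (subpath p2 x2 a) x2 a ∧
  InternallyDisjoint (subpath p1 b y1) b y1 (subpath p2 b y2) b y2

/-- `𝒞(P1, P2)` : the set of concordant pairs for `(P1, P2)`. -/
def concordantSet (p1 : List V) (x1 y1 : V) (p2 : List V) (x2 y2 : V) : Set (V × V) :=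
  {c | ConcordantPair p1 x1 y1 p2 x2 y2 c.1 c.2}

/-- The interaction complexity `γ(P1, P2) = Σ_{(v,w) ∈ 𝒞(P1,P2)} δ(v, w)`. -/
noncomputable def gamma (E : V → V → Prop) (ℓ : V → V → ℝ)
    (p1 : List V) (x1 y1 : V) (p2 : List V) (x2 y2 : V) : ℕ :=
  ∑ᶠ c ∈ concordantSet p1 x1 y1 p2 x2 y2, deltaCard E ℓ c.1 c.2

/-- `E(x, y)` : the set of edges lying on at least one shortest path
from `x` to `y`. -/
def shortestEdges (E : V → V → Prop) (ℓ : V → V → ℝ) (x y : V) : Set (V × V) :=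
  {e | ∃ p : List V, IsShortestPath E ℓ p x y ∧ e ∈ pathEdges p}

section Poly

variable (F : Type*) [Field F] [CharP F 2]

/-- The monomial `f(P) = ∏_{e ∈ E(P)} z_e` of a path. -/
noncomputable def pathMon (p : List V) : MvPolynomial (V × V) F :=
  ((pathEdges p).map fun e => MvPolynomial.X e).prod

/-- The enumerating polynomial of a collection of paths. -/
noncomputable def enumPoly (S : Set (List V)) : MvPolynomial (V × V) F :=
  ∑ᶠ p ∈ S, pathMon F p

/-- The enumerating polynomial of a collection of pairs of paths. -/
noncomputable def enumPoly2 (S : Set (List V × List V)) : MvPolynomial (V × V) F :=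
  ∑ᶠ q ∈ S, pathMon F q.1 * pathMon F q.2

variable (E : V → V → Prop) (ℓ : V → V → ℝ)

/-- `F(x, y)` : the enumerating polynomial of `Π(x, y)`. -/
noncomputable def Fpoly (x y : V) : MvPolynomial (V × V) F :=
  enumPoly F {p : List V | IsShortestPath E ℓ p x y}

end Poly

lemma pathWeight_cons (ℓ : V → V → ℝ) (x y : V) (t : List V) :
    pathWeight ℓ (x :: y :: t) = ℓ x y + pathWeight ℓ (y :: t) := by
  simp [pathWeight, pathEdges]

lemma pathWeight_single (ℓ : V → V → ℝ) (x : V) : pathWeight ℓ [x] = 0 := by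
  simp [pathWeight, pathEdges]

lemma pw_glue (ℓ : V → V → ℝ) (x : V) (v : List V) :
    ∀ u : List V, pathWeight ℓ (u ++ x :: v) = pathWeight ℓ (u ++ [x]) + pathWeight ℓ (x :: v)
  | [] => by simp [pathWeight_single]
  | [h] => by simp [pathWeight_cons, pathWeight_single]
  | h :: h2 :: u' => by
      have ih := pw_glue ℓ x v (h2 :: u')
      simp only [List.cons_append, pathWeight_cons] at *
      rw [ih]; ring

lemma mem_take_indexOf {x : V} : ∀ (l : List V) (n : ℕ), x ∈ l.take n → List.idxOf x l < n
  | _, 0, h => by simp at h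
  | [], n+1, h => by simp at h
  | a :: t, n+1, h => by
      by_cases hx : a = x
      · simp [List.idxOf_cons_eq _ hx]
      · simp only [List.take_succ_cons, List.mem_cons] at h
        rcases h with h | h
        · exact absurd h.symm hx
        · rw [List.idxOf_cons_ne _ (by exact hx)]
          exact Nat.succ_lt_succ (mem_take_indexOf t n h)

lemma split_at_indexOf {x : V} {l : List V} (h : x ∈ l) :
    l = l.take (List.idxOf x l) ++ x :: l.drop (List.idxOf x l + 1) ∧
      x ∉ l.take (List.idxOf x l) := by
  have hlt : List.idxOf x l < l.length := List.idxOf_lt_length_iff.2 h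
  constructor
  · conv_lhs => rw [← List.take_append_drop (List.idxOf x l) l]
    congr 1
    rw [← List.getElem_cons_drop hlt, List.getElem_idxOf hlt]
  · intro hmem
    exact absurd (mem_take_indexOf l _ hmem) (lt_irrefl _)


lemma indexOf_head {p : List V} {x : V} (h : p.head? = some x) : List.idxOf x p = 0 := by
  cases p with
  | nil => simp at h
  | cons a t => simp at h; subst h; exact List.idxOf_cons_self

lemma idx_a {L T : List V} {a : V} (ha : a ∉ L) :
    List.idxOf a (L ++ a :: T) = L.length := by
  rw [List.idxOf_append_of_notMem ha, List.idxOf_cons_self]; omega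

lemma idx_b {L M R : List V} {a b : V} (hbL : b ∉ L) (hba : b ≠ a) (hbM : b ∉ M) :
    List.idxOf b (L ++ a :: (M ++ b :: R)) = L.length + M.length + 1 := by
  rw [List.idxOf_append_of_notMem hbL, List.idxOf_cons_ne _ (Ne.symm hba),
    List.idxOf_append_of_notMem hbM, List.idxOf_cons_self]
  omega

lemma sub_head {L T : List V} {a x : V} (ha : a ∉ L)
    (hx : (L ++ a :: T).head? = some x) :
    subpath (L ++ a :: T) x a = L ++ [a] := by
  unfold subpath
  rw [show (L ++ a :: T).idxOf a = List.idxOf a (L ++ a :: T) from rfl, idx_a ha,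
    show (L ++ a :: T).idxOf x = List.idxOf x (L ++ a :: T) from rfl, indexOf_head hx,
    List.drop_zero]
  rw [show L ++ a :: T = (L ++ [a]) ++ T by simp, List.take_append]
  simp

lemma sub_mid {L M R : List V} {a b : V} (haL : a ∉ L) (hbL : b ∉ L) (hba : b ≠ a)
    (hbM : b ∉ M) :
    subpath (L ++ a :: (M ++ b :: R)) a b = a :: (M ++ [b]) := by
  unfold subpath
  rw [show (L ++ a :: (M ++ b :: R)).idxOf b = List.idxOf b _ from rfl, idx_b hbL hba hbM,
    show (L ++ a :: (M ++ b :: R)).idxOf a = List.idxOf a _ from rfl, idx_a haL]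
  rw [show L ++ a :: (M ++ b :: R) = (L ++ a :: (M ++ [b])) ++ R by simp,
    List.take_append]
  have h1 : (L ++ a :: (M ++ [b])).length = L.length + M.length + 1 + 1 := by simp; omega
  rw [List.take_of_length_le (by omega), show L.length + M.length + 1 + 1 -
    (L ++ a :: (M ++ [b])).length = 0 by omega]
  simp [List.drop_append]

lemma indexOf_getLast {p : List V} {y : V} (hnd : p.Nodup) (hy : p.getLast? = some y) :
    List.idxOf y p = p.length - 1 := by
  have hne : p ≠ [] := by rintro rfl; simp at hy
  have hdec : p = p.dropLast ++ [y] := by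
    conv_lhs => rw [← List.dropLast_append_getLast hne]
    rw [List.getLast?_eq_getLast hne] at hy
    simp at hy; rw [hy]
  have hynot : y ∉ p.dropLast := by
    rw [hdec] at hnd
    rcases List.nodup_append.1 hnd with ⟨-, -, hdisj⟩
    intro hmem; exact hdisj _ hmem _ (by simp) rfl
  conv_lhs => rw [hdec]
  rw [List.idxOf_append_of_notMem hynot, List.idxOf_cons_self]
  conv_rhs => rw [hdec]
  simp

lemma sub_last {Lb R : List V} {b y : V} (hb : b ∉ Lb)
    (hnd : (Lb ++ b :: R).Nodup) (hy : (Lb ++ b :: R).getLast? = some y) :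
    subpath (Lb ++ b :: R) b y = b :: R := by
  unfold subpath
  rw [show (Lb ++ b :: R).idxOf y = List.idxOf y _ from rfl, indexOf_getLast hnd hy,
    show (Lb ++ b :: R).idxOf b = List.idxOf b _ from rfl, idx_a hb]
  rw [List.take_of_length_le (by simp; omega)]
  simp


lemma dup1 : ∀ (l : List V), ¬ l.Nodup → ∃ L c M R, l = L ++ c :: (M ++ c :: R) ∧ c ∉ M
  | [], h => absurd List.nodup_nil h
  | h :: t, hnd => by
      rw [List.nodup_cons] at hnd
      push_neg at hnd
      by_cases hm : h ∈ t
      · obtain ⟨heq, hnm⟩ := split_at_indexOf hm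
        exact ⟨[], h, t.take (List.idxOf h t), t.drop (List.idxOf h t + 1),
          by rw [List.nil_append]; rw [← heq], hnm⟩
      · obtain ⟨L, c, M, R, heq, hc⟩ := dup1 t (hnd hm)
        exact ⟨h :: L, c, M, R, by rw [heq]; rfl, hc⟩

lemma dup_decomp (l : List V) (h : ¬ l.Nodup) :
    ∃ L c M R, l = L ++ c :: (M ++ c :: R) ∧ c ∉ M ∧ M.Nodup := by
  suffices H : ∀ n (l : List V), l.length = n → ¬ l.Nodup →
      ∃ L c M R, l = L ++ c :: (M ++ c :: R) ∧ c ∉ M ∧ M.Nodup from H l.length l rfl h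
  clear h l
  intro n
  induction n using Nat.strong_induction_on with
  | _ n ih =>
    intro l hlen h
    obtain ⟨L, c, M, R, heq, hcM⟩ := dup1 l h
    by_cases hM : M.Nodup
    · exact ⟨L, c, M, R, heq, hcM, hM⟩
    · obtain ⟨L2, d, M2, R2, heq2, hd, hM2⟩ := ih M.length
        (by subst hlen; rw [heq]; simp; omega) M rfl hM
      refine ⟨L ++ c :: L2, d, M2, R2 ++ c :: R, ?_, hd, hM2⟩
      rw [heq, heq2]; simp

lemma glast {X R : List V} (b : V) : (X ++ b :: R).getLast? = (b :: R).getLast? := by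
  rw [List.getLast?_append, List.getLast?_eq_getLast (l := b :: R) (by simp), Option.or]


lemma walk_bound (E : V → V → Prop) (ℓ : V → V → ℝ) (hG : NoNonposCycle E ℓ)
    (p : List V) (hne : p ≠ []) (hc : p.Chain' E) (x y : V)
    (hx : p.head? = some x) (hy : p.getLast? = some y) :
    dist E ℓ x y ≤ (pathWeight ℓ p : EReal) ∧
      (¬ p.Nodup → dist E ℓ x y < (pathWeight ℓ p : EReal)) := by
  suffices H : ∀ n (p : List V), p.length = n → p ≠ [] → p.Chain' E →
      ∀ x y, p.head? = some x → p.getLast? = some y →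
      dist E ℓ x y ≤ (pathWeight ℓ p : EReal) ∧
        (¬ p.Nodup → dist E ℓ x y < (pathWeight ℓ p : EReal)) from
    H p.length p rfl hne hc x y hx hy
  clear hne hc hx hy p x y
  intro n
  induction n using Nat.strong_induction_on with
  | _ n ih =>
    intro p hlen hne hc x y hx hy
    by_cases hnd : p.Nodup
    · refine ⟨sInf_le ⟨p, ⟨⟨hne, hnd, hc⟩, hx, hy⟩, rfl⟩, fun h => absurd hnd h⟩
    · obtain ⟨L, c, M, R, heq, hcM, hM⟩ := dup_decomp p hnd
      subst heq
      have hCchain : (c :: (M ++ [c])).Chain' E :=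
        hc.infix ⟨L, R, by simp⟩
      have hcyc : IsCycle E (c :: (M ++ [c])) := by
        refine ⟨by simp, hCchain, ?_, ?_⟩
        · rw [show c :: (M ++ [c]) = (c :: M) ++ [c] by simp, List.getLast?_concat]
          simp
        · rw [List.tail_cons, List.nodup_append]
          exact ⟨hM, List.nodup_singleton c, fun u hu v hv => by
            simp at hv; subst hv; rintro rfl; exact hcM hu⟩
      have hpos : 0 < pathWeight ℓ (c :: (M ++ [c])) := hG _ hcyc
      have hc1 := (List.isChain_split.1 hc)
      have hc2 := List.isChain_split.1
        (show ((c :: M) ++ c :: R).IsChain E by simpa using hc1.2)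
      have hc' : (L ++ c :: R).Chain' E := List.isChain_split.2 ⟨hc1.1, hc2.2⟩
      have hx' : (L ++ c :: R).head? = some x := by
        rw [List.head?_append] at hx ⊢; simpa using hx
      have hy' : (L ++ c :: R).getLast? = some y := by
        rw [glast]
        rw [glast, show c :: (M ++ c :: R) = (c :: M) ++ c :: R by simp, glast] at hy
        exact hy
      have hw : pathWeight ℓ (L ++ c :: (M ++ c :: R)) =
          pathWeight ℓ (L ++ c :: R) + pathWeight ℓ (c :: (M ++ [c])) := by
        have e1 := pw_glue ℓ c (M ++ c :: R) L
        have e2 := pw_glue ℓ c R (c :: M)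
        have e3 := pw_glue ℓ c R L
        rw [show ((c :: M) ++ c :: R) = c :: (M ++ c :: R) by simp,
          show ((c :: M) ++ [c]) = c :: (M ++ [c]) by simp] at e2
        rw [e1, e2, e3]; ring
      obtain ⟨h1, -⟩ := ih (L ++ c :: R).length (by simp at hlen ⊢; omega)
        (L ++ c :: R) rfl (by simp) hc' x y hx' hy'
      have hlt : (pathWeight ℓ (L ++ c :: R) : EReal) <
          (pathWeight ℓ (L ++ c :: (M ++ c :: R)) : EReal) := by
        rw [EReal.coe_lt_coe_iff, hw]; linarith
      exact ⟨le_of_lt (lt_of_le_of_lt h1 hlt), fun _ => lt_of_le_of_lt h1 hlt⟩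

lemma chain3 {E : V → V → Prop} {L M R : List V} {a b : V} :
    (L ++ a :: (M ++ b :: R)).Chain' E ↔
      (L ++ [a]).Chain' E ∧ ((a :: M) ++ [b]).Chain' E ∧ (b :: R).Chain' E := by
  simp only [List.Chain']
  rw [List.isChain_split (l₁ := L) (c := a) (l₂ := M ++ b :: R),
    show a :: (M ++ b :: R) = (a :: M) ++ b :: R by simp,
    List.isChain_split (l₁ := a :: M) (c := b) (l₂ := R)]

lemma pw3 (ℓ : V → V → ℝ) (L M R : List V) (a b : V) :
    pathWeight ℓ (L ++ a :: (M ++ b :: R)) =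
      pathWeight ℓ (L ++ [a]) + pathWeight ℓ ((a :: M) ++ [b]) + pathWeight ℓ (b :: R) := by
  rw [pw_glue ℓ a (M ++ b :: R) L, show a :: (M ++ b :: R) = (a :: M) ++ b :: R by simp,
    pw_glue ℓ b R (a :: M)]
  ring

lemma indexOf_strict {p : List V} {a b : V} (ha : a ∈ p) (hab : a ≠ b)
    (hle : List.idxOf a p ≤ List.idxOf b p) : List.idxOf a p < List.idxOf b p := by
  rcases lt_or_eq_of_le hle with h | h
  · exact h
  · exfalso
    apply hab
    have h1 : List.idxOf a p < p.length := List.idxOf_lt_length_iff.2 ha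
    have h2 : List.idxOf b p < p.length := h ▸ h1
    calc a = p[List.idxOf a p] := (List.getElem_idxOf h1).symm
      _ = p[List.idxOf b p] := by congr 1
      _ = b := List.getElem_idxOf h2

lemma decomp (p : List V) (a b : V) (ha : a ∈ p) (hb : b ∈ p)
    (hij : List.idxOf a p < List.idxOf b p) :
    ∃ L M R, p = L ++ a :: (M ++ b :: R) ∧ a ∉ L ∧ b ∉ L ∧ b ≠ a ∧ b ∉ M := by
  obtain ⟨heq, haL⟩ := split_at_indexOf ha
  have hbL : b ∉ p.take (List.idxOf a p) := fun h =>
    absurd (mem_take_indexOf p _ h) (by omega)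
  have hba : b ≠ a := by rintro rfl; exact absurd hij (lt_irrefl _)
  have hbT : b ∈ p.drop (List.idxOf a p + 1) := by
    have hb' := hb
    rw [heq] at hb'
    simp only [List.mem_append, List.mem_cons] at hb'
    rcases hb' with h | h | h
    · exact absurd h hbL
    · exact absurd h hba
    · exact h
  obtain ⟨heq2, hbM⟩ := split_at_indexOf hbT
  exact ⟨p.take (List.idxOf a p), _, _, heq.trans (by rw [← heq2]), haL, hbL, hba, hbM⟩

variable (E : V → V → Prop) (ℓ : V → V → ℝ)

/-- The collection of internally vertex-disjoint pairs
`(P1, P2) ∈ Π(x1, y1) × Π(x2, y2)`. -/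
def disjPairs (x1 y1 x2 y2 : V) : Set (List V × List V) :=
  {q | IsShortestPath E ℓ q.1 x1 y1 ∧ IsShortestPath E ℓ q.2 x2 y2 ∧
       InternallyDisjoint q.1 x1 y1 q.2 x2 y2}

/-- Pairs `(P1, P2) ∈ Π(x1, y1) × Π(x2, y2)` such that `v ∈ V(P1) ∩ V(P2)`
and the prefix `P1[x1, v]` and the suffix `P2[v, y2]` are internally
vertex-disjoint (defining `H_v`). -/
def HvPairs (v x1 y1 x2 y2 : V) : Set (List V × List V) :=
  {q | IsShortestPath E ℓ q.1 x1 y1 ∧ IsShortestPath E ℓ q.2 x2 y2 ∧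
       v ∈ q.1 ∧ v ∈ q.2 ∧
       InternallyDisjoint (subpath q.1 x1 v) x1 v (subpath q.2 v y2) v y2}

/-- Pairs `(P1, P2) ∈ Π(x1, y1) × Π(x2, y2)` such that
`(a, v) ∈ E(P1) ∩ E(P2)` and the prefix `P1[x1, a]` and the suffix
`P2[v, y2]` are internally vertex-disjoint (defining `H_{av}`). -/
def HavPairs (a v x1 y1 x2 y2 : V) : Set (List V × List V) :=
  {q | IsShortestPath E ℓ q.1 x1 y1 ∧ IsShortestPath E ℓ q.2 x2 y2 ∧
       (a, v) ∈ pathEdges q.1 ∧ (a, v) ∈ pathEdges q.2 ∧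
       InternallyDisjoint (subpath q.1 x1 a) x1 a (subpath q.2 v y2) v y2}

/-- Pairs `(P1, P2) ∈ Π(x1, y1) × Π(x2, y2)` such that `v ∈ V(P1) ∩ V(P2)`
and the prefix `P1[x1, v]` is internally vertex-disjoint from both
`P2[x2, v]` and `P2[v, y2]` (defining `D_v`). -/
def DvPairs (v x1 y1 x2 y2 : V) : Set (List V × List V) :=
  {q | IsShortestPath E ℓ q.1 x1 y1 ∧ IsShortestPath E ℓ q.2 x2 y2 ∧
       v ∈ q.1 ∧ v ∈ q.2 ∧
       InternallyDisjoint (subpath q.1 x1 v) x1 v (subpath q.2 x2 v) x2 v ∧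
       InternallyDisjoint (subpath q.1 x1 v) x1 v (subpath q.2 v y2) v y2}

/-- Pairs `(P1, P2) ∈ Π(x1, y1) × Π(x2, y2)` with interaction complexity
`γ(P1, P2) ≤ k` (defining `F_{disj,k}`). -/
def disjkPairs (k : ℤ) (x1 y1 x2 y2 : V) : Set (List V × List V) :=
  {q | IsShortestPath E ℓ q.1 x1 y1 ∧ IsShortestPath E ℓ q.2 x2 y2 ∧
       (gamma E ℓ q.1 x1 y1 q.2 x2 y2 : ℤ) ≤ k}

/-- Pairs `(P1, P2) ∈ Π(x1, y1) × Π(x2, y2)` with `γ(P1, P2) ≤ k` such that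
`(v, w) ∈ 𝒞(P1, P2)` and `(v, w)` is the concordant pair appearing first
along `P1` (defining `D_{v,w,k}`). -/
def DvwkPairs (k : ℤ) (v w x1 y1 x2 y2 : V) : Set (List V × List V) :=
  {q | IsShortestPath E ℓ q.1 x1 y1 ∧ IsShortestPath E ℓ q.2 x2 y2 ∧
       (gamma E ℓ q.1 x1 y1 q.2 x2 y2 : ℤ) ≤ k ∧
       (v, w) ∈ concordantSet q.1 x1 y1 q.2 x2 y2 ∧
       ∀ c ∈ concordantSet q.1 x1 y1 q.2 x2 y2, q.1.idxOf v ≤ q.1.idxOf c.1}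

/-- Pairs `(P1, P2) ∈ Π(x1, y1) × Π(x2, y2)` such that `v` and `w` lie on
both paths with `v` preceding `w` on both, the subpaths `P1[x1, v]` and
`P2[w, y2]` are internally vertex-disjoint, and
`γ(P1[v, y1], P2[x2, w]) ≤ k` (defining `H_{v,w,k}`). -/
def HvwkPairs (k : ℤ) (v w x1 y1 x2 y2 : V) : Set (List V × List V) :=
  {q | IsShortestPath E ℓ q.1 x1 y1 ∧ IsShortestPath E ℓ q.2 x2 y2 ∧
       Precedes q.1 v w ∧ Precedes q.2 v w ∧
       InternallyDisjoint (subpath q.1 x1 v) x1 v (subpath q.2 w y2) w y2 ∧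
       (gamma E ℓ (subpath q.1 v y1) v y1 (subpath q.2 x2 w) x2 w : ℤ) ≤ k}

/-- As `HvwkPairs`, additionally requiring the edge `(a, v)` on both paths
(disjointness imposed on `P1[x1, a]` and `P2[w, y2]`), defining `H_{av,w,k}`. -/
def HavwkPairs (k : ℤ) (a v w x1 y1 x2 y2 : V) : Set (List V × List V) :=
  {q | IsShortestPath E ℓ q.1 x1 y1 ∧ IsShortestPath E ℓ q.2 x2 y2 ∧
       Precedes q.1 v w ∧ Precedes q.2 v w ∧
       (a, v) ∈ pathEdges q.1 ∧ (a, v) ∈ pathEdges q.2 ∧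
       InternallyDisjoint (subpath q.1 x1 a) x1 a (subpath q.2 w y2) w y2 ∧
       (gamma E ℓ (subpath q.1 v y1) v y1 (subpath q.2 x2 w) x2 w : ℤ) ≤ k}

/-- As `HvwkPairs`, additionally requiring the edge `(w, b)` on both paths
(disjointness imposed on `P1[x1, v]` and `P2[b, y2]`), defining `H_{v,wb,k}`. -/
def HvwbkPairs (k : ℤ) (v w b x1 y1 x2 y2 : V) : Set (List V × List V) :=
  {q | IsShortestPath E ℓ q.1 x1 y1 ∧ IsShortestPath E ℓ q.2 x2 y2 ∧
       Precedes q.1 v w ∧ Precedes q.2 v w ∧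
       (w, b) ∈ pathEdges q.1 ∧ (w, b) ∈ pathEdges q.2 ∧
       InternallyDisjoint (subpath q.1 x1 v) x1 v (subpath q.2 b y2) b y2 ∧
       (gamma E ℓ (subpath q.1 v y1) v y1 (subpath q.2 x2 w) x2 w : ℤ) ≤ k}

/-- As `HvwkPairs`, additionally requiring both edges `(a, v)` and `(w, b)`
on both paths (disjointness imposed on `P1[x1, a]` and `P2[b, y2]`),
defining `H_{av,wb,k}`. -/
def HavwbkPairs (k : ℤ) (a v w b x1 y1 x2 y2 : V) : Set (List V × List V) :=
  {q | IsShortestPath E ℓ q.1 x1 y1 ∧ IsShortestPath E ℓ q.2 x2 y2 ∧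
       Precedes q.1 v w ∧ Precedes q.2 v w ∧
       (a, v) ∈ pathEdges q.1 ∧ (a, v) ∈ pathEdges q.2 ∧
       (w, b) ∈ pathEdges q.1 ∧ (w, b) ∈ pathEdges q.2 ∧
       InternallyDisjoint (subpath q.1 x1 a) x1 a (subpath q.2 b y2) b y2 ∧
       (gamma E ℓ (subpath q.1 v y1) v y1 (subpath q.2 x2 w) x2 w : ℤ) ≤ k}


/-- If `(P1, P2) ∈ Π(x1, y1) × Π(x2, y2)` has `(a, b)` as a
twin-crossing pair and `(Q1, Q2) = φ_{a,b}(P1, P2)`, then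
`(Q1, Q2) ∈ Π(x1, y1) × Π(x2, y2)`, `(a, b)` is twin-crossing for `(Q1, Q2)`,
`φ_{a,b}(Q1, Q2) = (P1, P2)`, and `(Q1, Q2) ≠ (P1, P2)`. -/
theorem swap_of_twin_crossing
    (hG : NoNonposCycle E ℓ) (x1 y1 x2 y2 a b : V) (P1 P2 : List V)
    (h1 : IsShortestPath E ℓ P1 x1 y1) (h2 : IsShortestPath E ℓ P2 x2 y2)
    (htc : TwinCrossingPair P1 P2 a b) :
    IsShortestPath E ℓ (swap P1 x1 y1 P2 x2 y2 a b).1 x1 y1 ∧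
    IsShortestPath E ℓ (swap P1 x1 y1 P2 x2 y2 a b).2 x2 y2 ∧
    TwinCrossingPair (swap P1 x1 y1 P2 x2 y2 a b).1 (swap P1 x1 y1 P2 x2 y2 a b).2 a b ∧
    swap (swap P1 x1 y1 P2 x2 y2 a b).1 x1 y1 (swap P1 x1 y1 P2 x2 y2 a b).2 x2 y2 a b
      = (P1, P2) ∧
    swap P1 x1 y1 P2 x2 y2 a b ≠ (P1, P2) := by
  obtain ⟨⟨⟨hne1, hnd1, hch1⟩, hx1, hy1⟩, hw1⟩ := h1
  obtain ⟨⟨⟨hne2, hnd2, hch2⟩, hx2, hy2⟩, hw2⟩ := h2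
  obtain ⟨hab, ⟨haP1, hbP1, hle1⟩, ⟨haP2, hbP2, hle2⟩, hsubne⟩ := htc
  have hlt1 : List.idxOf a P1 < List.idxOf b P1 := indexOf_strict haP1 hab hle1
  have hlt2 : List.idxOf a P2 < List.idxOf b P2 := indexOf_strict haP2 hab hle2
  obtain ⟨L1, M1, R1, e1, haL1, hbL1, hba, hbM1⟩ := decomp P1 a b haP1 hbP1 hlt1
  obtain ⟨L2, M2, R2, e2, haL2, hbL2, -, hbM2⟩ := decomp P2 a b haP2 hbP2 hlt2
  subst e1; subst e2
  have eP1 : L1 ++ a :: (M1 ++ b :: R1) = (L1 ++ a :: M1) ++ b :: R1 := by simp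
  have eP2 : L2 ++ a :: (M2 ++ b :: R2) = (L2 ++ a :: M2) ++ b :: R2 := by simp
  have hbLb1 : b ∉ L1 ++ a :: M1 := by
    simp only [List.mem_append, List.mem_cons]; push_neg; exact ⟨hbL1, hba, hbM1⟩
  have hbLb2 : b ∉ L2 ++ a :: M2 := by
    simp only [List.mem_append, List.mem_cons]; push_neg; exact ⟨hbL2, hba, hbM2⟩
  have s11 : subpath (L1 ++ a :: (M1 ++ b :: R1)) x1 a = L1 ++ [a] := sub_head haL1 hx1
  have s12 : subpath (L1 ++ a :: (M1 ++ b :: R1)) a b = a :: (M1 ++ [b]) :=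
    sub_mid haL1 hbL1 hba hbM1
  have s13 : subpath (L1 ++ a :: (M1 ++ b :: R1)) b y1 = b :: R1 := by
    rw [eP1]; exact sub_last hbLb1 (eP1 ▸ hnd1) (eP1 ▸ hy1)
  have s21 : subpath (L2 ++ a :: (M2 ++ b :: R2)) x2 a = L2 ++ [a] := sub_head haL2 hx2
  have s22 : subpath (L2 ++ a :: (M2 ++ b :: R2)) a b = a :: (M2 ++ [b]) :=
    sub_mid haL2 hbL2 hba hbM2
  have s23 : subpath (L2 ++ a :: (M2 ++ b :: R2)) b y2 = b :: R2 := by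
    rw [eP2]; exact sub_last hbLb2 (eP2 ▸ hnd2) (eP2 ▸ hy2)
  rw [s12, s22] at hsubne
  have hswap : swap (L1 ++ a :: (M1 ++ b :: R1)) x1 y1 (L2 ++ a :: (M2 ++ b :: R2)) x2 y2 a b
      = (L1 ++ a :: (M2 ++ b :: R1), L2 ++ a :: (M1 ++ b :: R2)) := by
    unfold swap pathConcat
    rw [s11, s22, s13, s21, s12, s23]
    simp
  have hxQ1 : (L1 ++ a :: (M2 ++ b :: R1)).head? = some x1 := by
    rw [List.head?_append, List.head?_cons] at hx1 ⊢; exact hx1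
  have hxQ2 : (L2 ++ a :: (M1 ++ b :: R2)).head? = some x2 := by
    rw [List.head?_append, List.head?_cons] at hx2 ⊢; exact hx2
  have eQ1 : L1 ++ a :: (M2 ++ b :: R1) = (L1 ++ a :: M2) ++ b :: R1 := by simp
  have eQ2 : L2 ++ a :: (M1 ++ b :: R2) = (L2 ++ a :: M1) ++ b :: R2 := by simp
  have hyQ1 : (L1 ++ a :: (M2 ++ b :: R1)).getLast? = some y1 := by
    rw [eQ1, glast]
    rw [eP1, glast] at hy1
    exact hy1
  have hyQ2 : (L2 ++ a :: (M1 ++ b :: R2)).getLast? = some y2 := by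
    rw [eQ2, glast]
    rw [eP2, glast] at hy2
    exact hy2
  have c1 := chain3.1 hch1
  have c2 := chain3.1 hch2
  have hchQ1 : (L1 ++ a :: (M2 ++ b :: R1)).Chain' E := chain3.2 ⟨c1.1, c2.2.1, c1.2.2⟩
  have hchQ2 : (L2 ++ a :: (M1 ++ b :: R2)).Chain' E := chain3.2 ⟨c2.1, c1.2.1, c2.2.2⟩
  have wb1 := walk_bound E ℓ hG (L1 ++ a :: (M2 ++ b :: R1)) (by simp) hchQ1 x1 y1 hxQ1 hyQ1
  have wb2 := walk_bound E ℓ hG (L2 ++ a :: (M1 ++ b :: R2)) (by simp) hchQ2 x2 y2 hxQ2 hyQ2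
  have hle1' : pathWeight ℓ (L1 ++ a :: (M1 ++ b :: R1))
      ≤ pathWeight ℓ (L1 ++ a :: (M2 ++ b :: R1)) := by
    have h := wb1.1; rw [← hw1] at h; exact_mod_cast h
  have hle2' : pathWeight ℓ (L2 ++ a :: (M2 ++ b :: R2))
      ≤ pathWeight ℓ (L2 ++ a :: (M1 ++ b :: R2)) := by
    have h := wb2.1; rw [← hw2] at h; exact_mod_cast h
  have hwsum : pathWeight ℓ (L1 ++ a :: (M2 ++ b :: R1))
        + pathWeight ℓ (L2 ++ a :: (M1 ++ b :: R2))
      = pathWeight ℓ (L1 ++ a :: (M1 ++ b :: R1))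
        + pathWeight ℓ (L2 ++ a :: (M2 ++ b :: R2)) := by
    rw [pw3, pw3, pw3, pw3]; ring
  have heqw1 : pathWeight ℓ (L1 ++ a :: (M2 ++ b :: R1))
      = pathWeight ℓ (L1 ++ a :: (M1 ++ b :: R1)) := by linarith
  have heqw2 : pathWeight ℓ (L2 ++ a :: (M1 ++ b :: R2))
      = pathWeight ℓ (L2 ++ a :: (M2 ++ b :: R2)) := by linarith
  have hndQ1 : (L1 ++ a :: (M2 ++ b :: R1)).Nodup := by
    by_contra h
    have h' := wb1.2 h
    rw [← hw1] at h'
    have : pathWeight ℓ (L1 ++ a :: (M1 ++ b :: R1))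
        < pathWeight ℓ (L1 ++ a :: (M2 ++ b :: R1)) := by exact_mod_cast h'
    linarith
  have hndQ2 : (L2 ++ a :: (M1 ++ b :: R2)).Nodup := by
    by_contra h
    have h' := wb2.2 h
    rw [← hw2] at h'
    have : pathWeight ℓ (L2 ++ a :: (M2 ++ b :: R2))
        < pathWeight ℓ (L2 ++ a :: (M1 ++ b :: R2)) := by exact_mod_cast h'
    linarith
  have hsp1 : IsShortestPath E ℓ (L1 ++ a :: (M2 ++ b :: R1)) x1 y1 :=
    ⟨⟨⟨by simp, hndQ1, hchQ1⟩, hxQ1, hyQ1⟩, by rw [heqw1]; exact hw1⟩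
  have hsp2 : IsShortestPath E ℓ (L2 ++ a :: (M1 ++ b :: R2)) x2 y2 :=
    ⟨⟨⟨by simp, hndQ2, hchQ2⟩, hxQ2, hyQ2⟩, by rw [heqw2]; exact hw2⟩
  have sQ11 : subpath (L1 ++ a :: (M2 ++ b :: R1)) x1 a = L1 ++ [a] := sub_head haL1 hxQ1
  have sQ12 : subpath (L1 ++ a :: (M2 ++ b :: R1)) a b = a :: (M2 ++ [b]) :=
    sub_mid haL1 hbL1 hba hbM2
  have hbLc1 : b ∉ L1 ++ a :: M2 := by
    simp only [List.mem_append, List.mem_cons]; push_neg; exact ⟨hbL1, hba, hbM2⟩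
  have hbLc2 : b ∉ L2 ++ a :: M1 := by
    simp only [List.mem_append, List.mem_cons]; push_neg; exact ⟨hbL2, hba, hbM1⟩
  have sQ13 : subpath (L1 ++ a :: (M2 ++ b :: R1)) b y1 = b :: R1 := by
    rw [eQ1]; exact sub_last hbLc1 (eQ1 ▸ hndQ1) (eQ1 ▸ hyQ1)
  have sQ21 : subpath (L2 ++ a :: (M1 ++ b :: R2)) x2 a = L2 ++ [a] := sub_head haL2 hxQ2
  have sQ22 : subpath (L2 ++ a :: (M1 ++ b :: R2)) a b = a :: (M1 ++ [b]) :=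
    sub_mid haL2 hbL2 hba hbM1
  have sQ23 : subpath (L2 ++ a :: (M1 ++ b :: R2)) b y2 = b :: R2 := by
    rw [eQ2]; exact sub_last hbLc2 (eQ2 ▸ hndQ2) (eQ2 ▸ hyQ2)
  rw [hswap]
  refine ⟨hsp1, hsp2, ?_, ?_, ?_⟩
  · refine ⟨hab, ⟨by simp, by simp, ?_⟩, ⟨by simp, by simp, ?_⟩, ?_⟩
    · show List.idxOf a (L1 ++ a :: (M2 ++ b :: R1))
        ≤ List.idxOf b (L1 ++ a :: (M2 ++ b :: R1))
      rw [idx_a haL1, idx_b hbL1 hba hbM2]; omega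
    · show List.idxOf a (L2 ++ a :: (M1 ++ b :: R2))
        ≤ List.idxOf b (L2 ++ a :: (M1 ++ b :: R2))
      rw [idx_a haL2, idx_b hbL2 hba hbM1]; omega
    · show subpath (L1 ++ a :: (M2 ++ b :: R1)) a b ≠ subpath (L2 ++ a :: (M1 ++ b :: R2)) a b
      rw [sQ12, sQ22]
      exact hsubne.symm
  · unfold swap pathConcat
    rw [sQ11, sQ22, sQ13, sQ21, sQ12, sQ23]
    simp
  · intro h
    have h1' : L1 ++ a :: (M2 ++ b :: R1) = L1 ++ a :: (M1 ++ b :: R1) :=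
      congrArg Prod.fst h
    have h2' := congrArg (fun l => subpath l a b) h1'
    rw [sQ12, s12] at h2'
    exact hsubne h2'.symm

end DSP
end

section
/- Let v, w be vertices of G such that there is at least one path from v to w. Then there exist two shortest paths P and Q from v to w such that V(P) ∩ V(Q) ⊆ Δ(v, w); that is, P and Q intersect only at (v, w)-distance-critical vertices (and the endpoints v, w). -/
open scoped BigOperators

namespace DSP

variable {V : Type*} [Fintype V] [DecidableEq V]

variable (E : V → V → Prop) (ℓ : V → V → ℝ)

/-! ### Auxiliary lemmas -/

section Aux
set_option linter.unusedSectionVars false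

@[simp] theorem List.chain'_nil {R : V → V → Prop} : List.Chain' R [] := List.isChain_nil

@[simp] theorem List.chain'_singleton {R : V → V → Prop} (a : V) : List.Chain' R [a] :=
  List.isChain_singleton a

@[simp] theorem List.chain'_cons {R : V → V → Prop} {a b : V} {l : List V} :
    List.Chain' R (a :: b :: l) ↔ R a b ∧ List.Chain' R (b :: l) := List.isChain_cons_cons

theorem List.chain'_split {R : V → V → Prop} {a : V} {l₁ l₂ : List V} :
    List.Chain' R (l₁ ++ a :: l₂) ↔ List.Chain' R (l₁ ++ [a]) ∧ List.Chain' R (a :: l₂) :=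
  List.isChain_split

theorem List.Chain'.imp {R S : V → V → Prop} (H : ∀ a b, R a b → S a b) {l : List V}
    (p : List.Chain' R l) : List.Chain' S l := List.IsChain.imp H p

theorem List.chain'_iff_pairwise {R : V → V → Prop} [IsTrans V R] {l : List V} :
    List.Chain' R l ↔ l.Pairwise R := List.isChain_iff_pairwise

lemma pathEdges_cons_cons (a b : V) (t : List V) :
    pathEdges (a :: b :: t) = (a, b) :: pathEdges (b :: t) := rfl

lemma pathWeight_nil : pathWeight ℓ ([] : List V) = 0 := by
  simp [pathWeight, pathEdges]

lemma pathWeight_singleton (a : V) : pathWeight ℓ [a] = 0 := by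
  simp [pathWeight, pathEdges]

lemma pathWeight_cons_cons (a b : V) (t : List V) :
    pathWeight ℓ (a :: b :: t) = ℓ a b + pathWeight ℓ (b :: t) := by
  simp [pathWeight, pathEdges]

lemma pathWeight_split (s : List V) (a : V) (t : List V) :
    pathWeight ℓ (s ++ a :: t) = pathWeight ℓ (s ++ [a]) + pathWeight ℓ (a :: t) := by
  induction s with
  | nil => simp [pathWeight_singleton]
  | cons x s' ih =>
    cases s' with
    | nil =>
      simp only [List.cons_append, List.nil_append, pathWeight_cons_cons,
        pathWeight_singleton]
      ring
    | cons y s'' =>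
      simp only [List.cons_append] at ih ⊢
      rw [pathWeight_cons_cons, pathWeight_cons_cons]
      rw [show (s'' ++ a :: t : List V) = s'' ++ a :: t from rfl] at ih
      rw [ih]
      ring

lemma mem_pathEdges_chain' {R : V → V → Prop} {p : List V} {a b : V}
    (h : p.Chain' R) (hm : (a, b) ∈ pathEdges p) : R a b := by
  induction p with
  | nil => simp [pathEdges] at hm
  | cons x t ih =>
    cases t with
    | nil => simp [pathEdges] at hm
    | cons y t' =>
      rw [List.chain'_cons] at h
      rw [pathEdges_cons_cons, List.mem_cons] at hm
      rcases hm with hm | hm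
      · cases hm; exact h.1
      · exact ih h.2 hm

lemma chain'_of_pathEdges {R : V → V → Prop} {p : List V}
    (h : ∀ a b : V, (a, b) ∈ pathEdges p → R a b) : p.Chain' R := by
  induction p with
  | nil => exact List.chain'_nil
  | cons x t ih =>
    cases t with
    | nil => simp
    | cons y t' =>
      rw [List.chain'_cons]
      refine ⟨h x y (by simp [pathEdges]), ih ?_⟩
      intro a b hm
      exact h a b (by simp [pathEdges] at hm ⊢; exact Or.inr hm)

lemma pathEdges_decomp {p : List V} {a b : V} (hm : (a, b) ∈ pathEdges p) :
    ∃ s t : List V, p = s ++ a :: b :: t := by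
  induction p with
  | nil => simp [pathEdges] at hm
  | cons x t ih =>
    cases t with
    | nil => simp [pathEdges] at hm
    | cons y t' =>
      rcases (by simpa [pathEdges] using hm : (a = x ∧ b = y) ∨ (a, b) ∈ pathEdges (y :: t')) with
        ⟨rfl, rfl⟩ | hm'
      · exact ⟨[], t', rfl⟩
      · obtain ⟨s, t'', hst⟩ := ih hm'
        exact ⟨x :: s, t'', by rw [List.cons_append, ← hst]⟩

lemma head?_append_cons (s : List V) (a : V) (t : List V) :
    (s ++ a :: t).head? = (s ++ [a]).head? := by
  cases s <;> simp

lemma getLast?_append_cons (s : List V) (a : V) (t : List V) :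
    (s ++ a :: t).getLast? = (a :: t).getLast? := by
  rw [List.getLast?_append]
  cases h : (a :: t).getLast? with
  | none => simp [List.getLast?_eq_getLast] at h
  | some z => simp [Option.or]

lemma head?_mem {p : List V} {a : V} (h : p.head? = some a) : a ∈ p := by
  cases p with
  | nil => simp at h
  | cons x t => simp at h; simp [h]

lemma eq_append_of_getLast? {p : List V} {a : V} (h : p.getLast? = some a) :
    ∃ s : List V, p = s ++ [a] := by
  induction p with
  | nil => simp at h
  | cons x t ih =>
    cases t with
    | nil => simp at h; exact ⟨[], by simp [h]⟩
    | cons y t' =>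
      rw [List.getLast?_cons_cons] at h
      obtain ⟨s, hs⟩ := ih h
      exact ⟨x :: s, by rw [hs, List.cons_append]⟩

lemma getLast?_mem {p : List V} {a : V} (h : p.getLast? = some a) : a ∈ p := by
  obtain ⟨s, rfl⟩ := eq_append_of_getLast? h
  simp

lemma sublist_pair_decomp {t : List V} {b : V} (h : List.Sublist [b, b] t) :
    ∃ u m r : List V, t = u ++ b :: (m ++ b :: r) := by
  induction t with
  | nil => simp at h
  | cons c t' ih =>
    cases h with
    | cons _ h' =>
      obtain ⟨u, m, r, rfl⟩ := ih h'
      exact ⟨c :: u, m, r, rfl⟩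
    | cons_cons _ h2 =>
      have hb : b ∈ t' := h2.subset (by simp)
      obtain ⟨m, r, rfl⟩ := List.append_of_mem hb
      exact ⟨[], m, r, rfl⟩

lemma repeat_decomp {p : List V} (h : ¬ p.Nodup) :
    ∃ (b : V) (s m r : List V), p = s ++ b :: (m ++ b :: r) := by
  obtain ⟨b, hb⟩ := List.exists_duplicate_iff_not_nodup.2 h
  obtain ⟨s, m, r, rfl⟩ := sublist_pair_decomp (List.duplicate_iff_sublist.1 hb)
  exact ⟨b, s, m, r, rfl⟩

lemma finite_weight_set (x y : V) :
    {w : EReal | ∃ p : List V, IsPathFrom E p x y ∧ (pathWeight ℓ p : EReal) = w}.Finite := by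
  apply Set.Finite.subset (Set.Finite.image (f := fun p : List V => (pathWeight ℓ p : EReal))
    (List.finite_length_le V (Fintype.card V)))
  rintro w ⟨p, hp, rfl⟩
  exact ⟨p, hp.1.2.1.length_le_card, rfl⟩

lemma dist_le_path {x y : V} {p : List V} (hp : IsPathFrom E p x y) :
    dist E ℓ x y ≤ (pathWeight ℓ p : EReal) :=
  sInf_le ⟨p, hp, rfl⟩

lemma exists_shortest {x y : V} (h : ∃ p : List V, IsPathFrom E p x y) :
    ∃ p : List V, IsShortestPath E ℓ p x y := by
  obtain ⟨p0, hp0⟩ := h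
  have hne : {w : EReal | ∃ p : List V, IsPathFrom E p x y ∧
      (pathWeight ℓ p : EReal) = w}.Nonempty := ⟨_, p0, hp0, rfl⟩
  have := hne.csInf_mem (finite_weight_set E ℓ x y)
  obtain ⟨p, hp, hw⟩ := this
  exact ⟨p, hp, hw⟩

lemma closedwalk_pos (hG : NoNonposCycle E ℓ) :
    ∀ n (p : List V), p.length ≤ n → 2 ≤ p.length → p.Chain' E →
      p.head? = p.getLast? → 0 < pathWeight ℓ p := by
  intro n
  induction n with
  | zero => intro p h1 h2 _ _; omega
  | succ n ih =>
    intro p hlen hlen2 hc hcl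
    by_cases hnd : p.tail.Nodup
    · exact hG p ⟨hlen2, hc, hcl, hnd⟩
    · obtain ⟨a, t, rfl⟩ : ∃ a t, p = a :: t := by
        cases p with
        | nil => simp at hlen2
        | cons a t => exact ⟨a, t, rfl⟩
      obtain ⟨b, u, m, r, rfl⟩ := repeat_decomp hnd
      -- p = a :: u ++ b :: m ++ b :: r
      have hp1 : (a :: (u ++ b :: (m ++ b :: r)) : List V)
          = (a :: u) ++ b :: (m ++ b :: r) := by simp
      have hc1 := (List.chain'_split (l₁ := a :: u) (a := b)
        (l₂ := m ++ b :: r)).1 (hp1 ▸ hc)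
      have hc2 := (List.chain'_split (l₁ := b :: m) (a := b) (l₂ := r)).1
        (by simpa using hc1.2)
      -- inner closed walk: (b :: m) ++ [b]
      have hinner : 0 < pathWeight ℓ ((b :: m) ++ [b]) := by
        apply ih ((b :: m) ++ [b])
        · simp only [List.length_append, List.length_cons] at hlen ⊢
          simp at hlen ⊢; omega
        · simp
        · exact hc2.1
        · rw [show (b :: m ++ [b] : List V) = (b :: m) ++ [b] from rfl, List.getLast?_concat]
          rfl
      -- outer reduced walk: (a :: u) ++ b :: r
      have houter : 0 < pathWeight ℓ ((a :: u) ++ b :: r) := by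
        apply ih
        · simp only [List.length_append, List.length_cons] at hlen ⊢
          simp at hlen ⊢; omega
        · simp; omega
        · exact (List.chain'_split (l₁ := a :: u) (a := b) (l₂ := r)).2
            ⟨hc1.1, hc2.2⟩
        · rw [getLast?_append_cons]
          rw [hp1, getLast?_append_cons] at hcl
          rw [show (b :: (m ++ b :: r) : List V) = (b :: m) ++ b :: r by simp,
            getLast?_append_cons] at hcl
          simpa using hcl
      have hw1 : pathWeight ℓ ((a :: u) ++ b :: (m ++ b :: r))
          = pathWeight ℓ ((a :: u) ++ [b]) + pathWeight ℓ (b :: (m ++ b :: r)) :=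
        pathWeight_split ℓ _ _ _
      have hw2 : pathWeight ℓ ((b :: m) ++ b :: r)
          = pathWeight ℓ ((b :: m) ++ [b]) + pathWeight ℓ (b :: r) :=
        pathWeight_split ℓ _ _ _
      have hw3 : pathWeight ℓ ((a :: u) ++ b :: r)
          = pathWeight ℓ ((a :: u) ++ [b]) + pathWeight ℓ (b :: r) :=
        pathWeight_split ℓ _ _ _
      have hEq : (b :: (m ++ b :: r) : List V) = (b :: m) ++ b :: r := by simp
      rw [hp1, hEq]
      rw [hEq] at hw1
      linarith

lemma dist_le_walk (hG : NoNonposCycle E ℓ) {x y : V} :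
    ∀ n (p : List V), p.length ≤ n → p ≠ [] → p.Chain' E → p.head? = some x →
      p.getLast? = some y → dist E ℓ x y ≤ (pathWeight ℓ p : EReal) := by
  intro n
  induction n with
  | zero =>
    intro p h1 h2 _ _ _
    cases p with
    | nil => exact absurd rfl h2
    | cons a t => simp at h1
  | succ n ih =>
    intro p hlen hne hc hh hl
    by_cases hnd : p.Nodup
    · exact dist_le_path E ℓ ⟨⟨hne, hnd, hc⟩, hh, hl⟩
    · obtain ⟨b, s, m, r, rfl⟩ := repeat_decomp hnd
      have hsplit1 := (List.chain'_split (l₁ := s) (a := b) (l₂ := m ++ b :: r)).1 hc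
      have hsplit2 := (List.chain'_split (l₁ := b :: m) (a := b) (l₂ := r)).1
        (by simpa using hsplit1.2)
      have hinner : 0 < pathWeight ℓ ((b :: m) ++ [b]) := by
        apply closedwalk_pos E ℓ hG ((b :: m) ++ [b]).length
        · rfl
        · simp
        · exact hsplit2.1
        · rw [show (b :: m ++ [b] : List V) = (b :: m) ++ [b] from rfl, List.getLast?_concat]
          rfl
      have hred : dist E ℓ x y ≤ (pathWeight ℓ (s ++ b :: r) : EReal) := by
        apply ih (s ++ b :: r)
        · simp only [List.length_append, List.length_cons] at hlen ⊢; omega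
        · simp
        · exact (List.chain'_split (l₁ := s) (a := b) (l₂ := r)).2 ⟨hsplit1.1, hsplit2.2⟩
        · rw [head?_append_cons]; rw [head?_append_cons] at hh; exact hh
        · rw [getLast?_append_cons]
          rw [getLast?_append_cons, show (b :: (m ++ b :: r) : List V) = (b :: m) ++ b :: r
            by simp, getLast?_append_cons] at hl
          simpa using hl
      refine le_trans hred ?_
      rw [EReal.coe_le_coe_iff]
      have hw1 := pathWeight_split ℓ s b (m ++ b :: r)
      have hw2 := pathWeight_split ℓ (b :: m) b r
      have hw3 := pathWeight_split ℓ s b r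
      have hEq : (b :: (m ++ b :: r) : List V) = (b :: m) ++ b :: r := by simp
      rw [hEq] at hw1 ⊢
      linarith

lemma path_from_self {x : V} {p : List V} (hp : IsPathFrom E p x x) : p = [x] := by
  obtain ⟨⟨hne, hnd, _⟩, hh, hl⟩ := hp
  cases p with
  | nil => exact absurd rfl hne
  | cons a t =>
    have hax : x = a := by simpa using hh.symm
    subst hax
    cases t with
    | nil => rfl
    | cons c t' =>
      exfalso
      rw [show (x :: c :: t' : List V) = [x] ++ c :: t' from rfl, getLast?_append_cons] at hl
      exact (List.nodup_cons.1 hnd).1 (getLast?_mem hl)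

lemma dist_self (x : V) : dist E ℓ x x = ((0 : ℝ) : EReal) := by
  have hset : {w : EReal | ∃ p : List V, IsPathFrom E p x x ∧ (pathWeight ℓ p : EReal) = w}
      = {((0 : ℝ) : EReal)} := by
    ext w
    constructor
    · rintro ⟨p, hp, rfl⟩
      rw [path_from_self E hp]
      simp [pathWeight_singleton]
    · rintro rfl
      exact ⟨[x], ⟨⟨by simp, by simp, by simp⟩, rfl, rfl⟩, by rw [pathWeight_singleton]⟩
  rw [dist, hset, csInf_singleton]

lemma prefix_weight (hG : NoNonposCycle E ℓ) {v w z : V} {p s t : List V}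
    (hp : IsShortestPath E ℓ p v w) (hdec : p = s ++ z :: t) :
    (pathWeight ℓ (s ++ [z]) : EReal) = dist E ℓ v z := by
  subst hdec
  obtain ⟨⟨⟨hne, hnd, hc⟩, hh, hl⟩, hw⟩ := hp
  have hc1 := (List.chain'_split (l₁ := s) (a := z) (l₂ := t)).1 hc
  have hpath0 : IsPathFrom E (s ++ [z]) v z := by
    refine ⟨⟨by simp, hnd.sublist ?_, hc1.1⟩, ?_, List.getLast?_concat⟩
    · exact List.Sublist.append_left (by simp) s
    · rw [← head?_append_cons]; exact hh
  have hle : dist E ℓ v z ≤ (pathWeight ℓ (s ++ [z]) : EReal) := dist_le_path E ℓ hpath0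
  rcases eq_or_lt_of_le hle with h | hlt
  · exact h.symm
  exfalso
  obtain ⟨q, hq⟩ := exists_shortest E ℓ ⟨s ++ [z], hpath0⟩
  obtain ⟨q', rfl⟩ := eq_append_of_getLast? hq.1.2.2
  have hqlt : pathWeight ℓ (q' ++ [z]) < pathWeight ℓ (s ++ [z]) := by
    rw [← EReal.coe_lt_coe_iff]
    calc (pathWeight ℓ (q' ++ [z]) : EReal) = dist E ℓ v z := hq.2
    _ < _ := hlt
  have hwalk : dist E ℓ v w ≤ (pathWeight ℓ (q' ++ z :: t) : EReal) := by
    apply dist_le_walk E ℓ hG (q' ++ z :: t).length _ le_rfl (by simp)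
    · exact (List.chain'_split (l₁ := q') (a := z) (l₂ := t)).2 ⟨hq.1.1.2.2, hc1.2⟩
    · rw [head?_append_cons]; exact hq.1.2.1
    · rw [getLast?_append_cons, ← getLast?_append_cons (s := s)]; exact hl
  rw [← hw] at hwalk
  have h1 := pathWeight_split ℓ q' z t
  have h2 := pathWeight_split ℓ s z t
  rw [EReal.coe_le_coe_iff] at hwalk
  rw [h1, h2] at hwalk
  linarith

lemma edge_dist (hG : NoNonposCycle E ℓ) {v w a b : V}
    (hab : (a, b) ∈ shortestEdges E ℓ v w) :
    ∃ ra : ℝ, dist E ℓ v a = (ra : EReal) ∧ dist E ℓ v b = ((ra + ℓ a b : ℝ) : EReal) := by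
  obtain ⟨p, hp, hm⟩ := hab
  obtain ⟨s, t, rfl⟩ := pathEdges_decomp hm
  have h1 := prefix_weight E ℓ hG hp (s := s) (z := a) (t := b :: t) rfl
  have h2 := prefix_weight E ℓ hG hp (s := s ++ [a]) (z := b) (t := t) (by simp)
  refine ⟨pathWeight ℓ (s ++ [a]), h1.symm, ?_⟩
  rw [← h2]
  have h3 := pathWeight_split ℓ s a [b]
  rw [show ((s ++ [a]) ++ [b] : List V) = s ++ a :: [b] by simp, h3,
    pathWeight_cons_cons, pathWeight_singleton]
  norm_num

def SE (E : V → V → Prop) (ℓ : V → V → ℝ) (v w : V) (a b : V) : Prop :=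
  (a, b) ∈ shortestEdges E ℓ v w

lemma SE_to_E {v w a b : V} (h : SE E ℓ v w a b) : E a b := by
  obtain ⟨p, hp, hm⟩ := h
  exact mem_pathEdges_chain' hp.1.1.2.2 hm

lemma chain'_SE {v w : V} {p : List V} (hp : IsShortestPath E ℓ p v w) :
    p.Chain' (SE E ℓ v w) :=
  chain'_of_pathEdges (fun _ _ hm => ⟨p, hp, hm⟩)

lemma SE_walk_weight (hG : NoNonposCycle E ℓ) {v w : V} :
    ∀ (p : List V) (a b : V) (ra : ℝ), p.Chain' (SE E ℓ v w) → p.head? = some a →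
      p.getLast? = some b → dist E ℓ v a = (ra : EReal) →
      dist E ℓ v b = ((ra + pathWeight ℓ p : ℝ) : EReal) := by
  intro p
  induction p with
  | nil => intro a b ra _ hh; simp at hh
  | cons c q ih =>
    intro a b ra hc hh hl hda
    obtain rfl : c = a := by simpa using hh
    cases q with
    | nil =>
      obtain rfl : b = c := by simpa using hl.symm
      rw [pathWeight_singleton]
      simpa using hda
    | cons d q' =>
      rw [List.chain'_cons] at hc
      obtain ⟨ra', h1, h2⟩ := edge_dist E ℓ hG hc.1
      have hra : ra = ra' := by
        rw [hda] at h1; exact_mod_cast h1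
      subst hra
      have := ih d b (ra + ℓ c d) hc.2 rfl (by rw [← hl]; rfl) h2
      rw [this, pathWeight_cons_cons]
      congr 1
      ring

lemma walk_shortest (hG : NoNonposCycle E ℓ) {v w : V} (f : V → ℕ)
    (hf : ∀ a b, SE E ℓ v w a b → f a < f b) {p : List V} (hne : p ≠ [])
    (hc : p.Chain' (SE E ℓ v w)) (hh : p.head? = some v) (hl : p.getLast? = some w) :
    IsShortestPath E ℓ p v w := by
  have hflt : p.Chain' (fun a b => f a < f b) := List.Chain'.imp hf hc
  haveI : IsTrans V (fun a b : V => f a < f b) := ⟨fun _ _ _ h1 h2 => lt_trans h1 h2⟩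
  have hpw := List.chain'_iff_pairwise.1 hflt
  have hnd : p.Nodup := hpw.imp (fun h heq => absurd (heq ▸ h) (lt_irrefl _))
  have hcE : p.Chain' E := List.Chain'.imp (fun _ _ h => SE_to_E E ℓ h) hc
  refine ⟨⟨⟨hne, hnd, hcE⟩, hh, hl⟩, ?_⟩
  have := SE_walk_weight E ℓ hG p v w 0 hc hh hl (dist_self E ℓ v)
  rw [this]
  norm_num

lemma transGen_chain {R : V → V → Prop} {a b : V} (h : Relation.TransGen R a b) :
    ∃ m : List V, (a :: (m ++ [b])).Chain' R := by
  induction h with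
  | single h => exact ⟨[], by simpa using h⟩
  | tail hab hbc ih =>
    rename_i b' c'
    obtain ⟨m, hm⟩ := ih
    refine ⟨m ++ [b'], ?_⟩
    rw [show (a :: ((m ++ [b']) ++ [c']) : List V) = (a :: m) ++ b' :: [c'] by simp]
    refine (List.chain'_split (l₁ := a :: m) (a := b') (l₂ := [c'])).2 ⟨?_, ?_⟩
    · simpa using hm
    · simpa using hbc

lemma SE_no_closed (hG : NoNonposCycle E ℓ) {v w u : V} :
    ¬ Relation.TransGen (SE E ℓ v w) u u := by
  intro h
  obtain ⟨m, hm⟩ := transGen_chain h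
  have hedge : ∃ c, SE E ℓ v w u c := by
    cases m with
    | nil => exact ⟨u, by simpa using hm⟩
    | cons c m' => exact ⟨c, (List.chain'_cons.1 (by simpa using hm)).1⟩
  obtain ⟨c, hSE⟩ := hedge
  obtain ⟨ra, hra, -⟩ := edge_dist E ℓ hG hSE
  have hlast : (u :: (m ++ [u])).getLast? = some u := by
    rw [show (u :: (m ++ [u]) : List V) = (u :: m) ++ [u] by simp, List.getLast?_concat]
  have htel := SE_walk_weight E ℓ hG (u :: (m ++ [u])) u u ra hm rfl hlast hra
  have hW0 : pathWeight ℓ (u :: (m ++ [u])) = 0 := by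
    rw [hra] at htel
    have : ra = ra + pathWeight ℓ (u :: (m ++ [u])) := by exact_mod_cast htel
    linarith
  have hpos := closedwalk_pos E ℓ hG (u :: (m ++ [u])).length (u :: (m ++ [u])) le_rfl
    (by simp) (List.Chain'.imp (fun _ _ h => SE_to_E E ℓ h) hm) (by rw [hlast]; rfl)
  linarith

lemma avoid_mem {u : V} : ∀ {p : List V}, p.Chain' (deleteVertex E u) →
    ∀ {a : V}, p.head? = some a → a ≠ u → u ∉ p := by
  intro p
  induction p with
  | nil => simp
  | cons c t ih =>
    intro hc a hh hau
    obtain rfl : c = a := by simpa using hh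
    cases t with
    | nil =>
      intro hmem
      rw [List.mem_singleton] at hmem
      exact hau hmem.symm
    | cons d t' =>
      rw [List.chain'_cons] at hc
      have hd : d ≠ u := hc.1.2.2
      have hrec := ih hc.2 (a := d) rfl hd
      intro hmem
      rcases List.mem_cons.1 hmem with h | h
      · exact hau h.symm
      · exact hrec h

lemma del_pathFrom {u v w : V} {p : List V} (hp : IsPathFrom (deleteVertex E u) p v w) :
    IsPathFrom E p v w :=
  ⟨⟨hp.1.1, hp.1.2.1, List.Chain'.imp (fun _ _ h => h.1) hp.1.2.2⟩, hp.2⟩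

lemma exists_avoid {v w u : V} (hreach : ∃ p : List V, IsPathFrom E p v w)
    (hu : u ∉ Delta E ℓ v w) : ∃ R : List V, IsShortestPath E ℓ R v w ∧ u ∉ R := by
  have hvD : v ∈ Delta E ℓ v w := Or.inr (Set.mem_insert _ _)
  have huv : v ≠ u := fun h => hu (h ▸ hvD)
  have hncrit : ¬ DistCritical E ℓ v w u := fun h => hu (Or.inl h)
  have hled : dist E ℓ v w ≤ dist (deleteVertex E u) ℓ v w := by
    apply sInf_le_sInf
    rintro x ⟨p, hp, rfl⟩
    exact ⟨p, del_pathFrom E hp, rfl⟩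
  have heq : dist (deleteVertex E u) ℓ v w = dist E ℓ v w :=
    le_antisymm (not_lt.1 hncrit) hled
  obtain ⟨P0, hP0⟩ := exists_shortest E ℓ hreach
  have hne' : {x : EReal | ∃ p : List V, IsPathFrom (deleteVertex E u) p v w ∧
      (pathWeight ℓ p : EReal) = x}.Nonempty := by
    by_contra h
    rw [Set.not_nonempty_iff_eq_empty] at h
    have htop : dist (deleteVertex E u) ℓ v w = ⊤ := by
      rw [dist, h, sInf_empty]
    rw [heq, ← hP0.2] at htop
    exact EReal.coe_ne_top _ htop
  obtain ⟨-, p, hp, rfl⟩ := hne'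
  obtain ⟨R, hR⟩ := exists_shortest (deleteVertex E u) ℓ ⟨p, hp⟩
  refine ⟨R, ⟨del_pathFrom E hR.1, ?_⟩, ?_⟩
  · rw [hR.2, heq]
  · exact avoid_mem E hR.1.1.2.2 hR.1.2.1 huv

lemma pairwise_split_bounds {f : V → ℕ} {l s t : List V} {a : V}
    (hpw : l.Pairwise (fun x y => f x < f y)) (hdec : l = s ++ a :: t) :
    (∀ z ∈ s, f z < f a) ∧ ∀ z ∈ t, f a < f z := by
  subst hdec
  rw [List.pairwise_append] at hpw
  obtain ⟨h1, h2, h3⟩ := hpw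
  rw [List.pairwise_cons] at h2
  exact ⟨fun z hz => h3 z hz a (by simp), h2.1⟩

lemma f_inj_on {f : V → ℕ} : ∀ {l : List V}, l.Pairwise (fun x y => f x < f y) →
    ∀ a ∈ l, ∀ b ∈ l, f a = f b → a = b := by
  intro l
  induction l with
  | nil => simp
  | cons c t ih =>
    intro hpw a ha b hb hfab
    rw [List.pairwise_cons] at hpw
    rcases List.mem_cons.1 ha with rfl | ha' <;> rcases List.mem_cons.1 hb with rfl | hb'
    · rfl
    · exact absurd hfab (ne_of_lt (hpw.1 b hb'))
    · exact absurd hfab.symm (ne_of_lt (hpw.1 a ha'))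
    · exact ih hpw.2 a ha' b hb' hfab

lemma splice_shortest (hG : NoNonposCycle E ℓ) {v w x y : V} (f : V → ℕ)
    (hf : ∀ a b, SE E ℓ v w a b → f a < f b) (s M t : List V)
    (h1 : (s ++ [x]).Chain' (SE E ℓ v w)) (hh : (s ++ [x]).head? = some v)
    (h2 : ((x :: M) ++ [y]).Chain' (SE E ℓ v w))
    (h3 : (y :: t).Chain' (SE E ℓ v w)) (hl : (y :: t).getLast? = some w) :
    IsShortestPath E ℓ (s ++ x :: (M ++ y :: t)) v w := by
  have hEq : (x :: (M ++ y :: t) : List V) = (x :: M) ++ y :: t := by simp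
  apply walk_shortest E ℓ hG f hf (by simp)
  · refine (List.chain'_split (l₁ := s)).2 ⟨h1, ?_⟩
    rw [hEq]
    exact (List.chain'_split (l₁ := x :: M)).2 ⟨h2, h3⟩
  · rw [head?_append_cons]; exact hh
  · rw [getLast?_append_cons, hEq, getLast?_append_cons]; exact hl

lemma splice2_shortest (hG : NoNonposCycle E ℓ) {v w u : V} (f : V → ℕ)
    (hf : ∀ a b, SE E ℓ v w a b → f a < f b) (s t : List V)
    (h1 : (s ++ [u]).Chain' (SE E ℓ v w)) (hh : (s ++ [u]).head? = some v)
    (h2 : (u :: t).Chain' (SE E ℓ v w)) (hl : (u :: t).getLast? = some w) :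
    IsShortestPath E ℓ (s ++ u :: t) v w := by
  apply walk_shortest E ℓ hG f hf (by simp)
  · exact (List.chain'_split (l₁ := s)).2 ⟨h1, h2⟩
  · rw [head?_append_cons]; exact hh
  · rw [getLast?_append_cons]; exact hl

lemma pairwise_f_of_shortest {v w : V} (f : V → ℕ)
    (hf : ∀ a b, SE E ℓ v w a b → f a < f b) {A : List V}
    (hs : IsShortestPath E ℓ A v w) : A.Pairwise (fun a b => f a < f b) := by
  haveI : IsTrans V (fun a b : V => f a < f b) := ⟨fun _ _ _ h1 h2 => lt_trans h1 h2⟩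
  exact List.chain'_iff_pairwise.1 (List.Chain'.imp hf (chain'_SE E ℓ hs))

lemma fv_lt {f : V → ℕ} {P : List V} {v u : V} (hh : P.head? = some v)
    (hpw : P.Pairwise (fun a b => f a < f b)) (huP : u ∈ P) (hne : u ≠ v) :
    f v < f u := by
  obtain ⟨s, t, rfl⟩ := List.append_of_mem huP
  have hb := pairwise_split_bounds hpw rfl
  cases s with
  | nil => exact absurd (show u = v by simpa using hh) hne
  | cons c s' =>
    obtain rfl : c = v := by simpa using hh
    exact hb.1 c (by simp)

lemma fw_gt {f : V → ℕ} {P : List V} {w u : V} (hl : P.getLast? = some w)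
    (hpw : P.Pairwise (fun a b => f a < f b)) (huP : u ∈ P) (hne : u ≠ w) :
    f u < f w := by
  obtain ⟨s, t, rfl⟩ := List.append_of_mem huP
  have hb := pairwise_split_bounds hpw rfl
  rw [getLast?_append_cons] at hl
  have hwm : w ∈ u :: t := getLast?_mem hl
  rcases List.mem_cons.1 hwm with h | h
  · exact absurd h.symm hne
  · exact hb.2 w h

lemma caseAA (hG : NoNonposCycle E ℓ) {v w u x y : V} {A B M : List V} (f : V → ℕ)
    (hf : ∀ a b, SE E ℓ v w a b → f a < f b)
    (hA : IsShortestPath E ℓ A v w) (hB : IsShortestPath E ℓ B v w)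
    (hxA : x ∈ A) (hyA : y ∈ A)
    (hmidc : ((x :: M) ++ [y]).Chain' (SE E ℓ v w))
    (hmidB : ∀ z ∈ M, z ∉ B)
    (hfx : f x < f u) (hfy : f u < f y) :
    ∃ P' Q' : List V, IsShortestPath E ℓ P' v w ∧ IsShortestPath E ℓ Q' v w ∧
      ∀ z, z ∈ P' → z ∈ Q' → z ≠ u ∧ z ∈ A ∧ z ∈ B := by
  have hApw := pairwise_f_of_shortest E ℓ f hf hA
  have hcA := chain'_SE E ℓ hA
  obtain ⟨S1, T1, hA1⟩ := List.append_of_mem hxA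
  obtain ⟨S2, T2, hA2⟩ := List.append_of_mem hyA
  have hbx := pairwise_split_bounds hApw hA1
  have hby := pairwise_split_bounds hApw hA2
  have hsplit1 := List.chain'_split.1 (hA1 ▸ hcA)
  have hsplit2 := List.chain'_split.1 (hA2 ▸ hcA)
  refine ⟨S1 ++ x :: (M ++ y :: T2), B, ?_, hB, ?_⟩
  · apply splice_shortest E ℓ hG f hf S1 M T2 hsplit1.1 ?_ hmidc hsplit2.2 ?_
    · rw [← head?_append_cons, ← hA1]; exact hA.1.2.1
    · rw [← getLast?_append_cons (s := S2), ← hA2]; exact hA.1.2.2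
  · intro z hzP hzB
    have hz5 : z ∈ S1 ∨ z = x ∨ z ∈ M ∨ z = y ∨ z ∈ T2 := by
      simpa using hzP
    rcases hz5 with h | rfl | h | rfl | h
    · have hlt : f z < f u := lt_trans (hbx.1 z h) hfx
      exact ⟨fun he => absurd hlt (by rw [he]; exact lt_irrefl _),
        by rw [hA1]; simp [h], hzB⟩
    · exact ⟨fun he => absurd hfx (by rw [he]; exact lt_irrefl _), hxA, hzB⟩
    · exact absurd hzB (hmidB z h)
    · exact ⟨fun he => absurd hfy (by rw [he]; exact lt_irrefl _), hyA, hzB⟩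
    · have hlt : f u < f z := lt_trans hfy (hby.2 z h)
      exact ⟨fun he => absurd hlt (by rw [he]; exact lt_irrefl _),
        by rw [hA2]; simp [h], hzB⟩

lemma caseAB (hG : NoNonposCycle E ℓ) {v w u x y : V} {A B M : List V} (f : V → ℕ)
    (hf : ∀ a b, SE E ℓ v w a b → f a < f b)
    (hA : IsShortestPath E ℓ A v w) (hB : IsShortestPath E ℓ B v w)
    (hxA : x ∈ A) (hyB : y ∈ B) (huA : u ∈ A) (huB : u ∈ B)
    (hmidc : ((x :: M) ++ [y]).Chain' (SE E ℓ v w))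
    (hmidA : ∀ z ∈ M, z ∉ A) (hmidB : ∀ z ∈ M, z ∉ B)
    (hfx : f x < f u) (hfy : f u < f y) :
    ∃ P' Q' : List V, IsShortestPath E ℓ P' v w ∧ IsShortestPath E ℓ Q' v w ∧
      ∀ z, z ∈ P' → z ∈ Q' → z ≠ u ∧ z ∈ A ∧ z ∈ B := by
  have hApw := pairwise_f_of_shortest E ℓ f hf hA
  have hBpw := pairwise_f_of_shortest E ℓ f hf hB
  have hcA := chain'_SE E ℓ hA
  have hcB := chain'_SE E ℓ hB
  obtain ⟨S1, T1, hA1⟩ := List.append_of_mem hxA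
  obtain ⟨Pa, Pb, hAu⟩ := List.append_of_mem huA
  obtain ⟨Qa, Qb, hBu⟩ := List.append_of_mem huB
  obtain ⟨S2, T2, hB2⟩ := List.append_of_mem hyB
  have hbx := pairwise_split_bounds hApw hA1
  have hbPu := pairwise_split_bounds hApw hAu
  have hbQu := pairwise_split_bounds hBpw hBu
  have hby := pairwise_split_bounds hBpw hB2
  have hsA1 := List.chain'_split.1 (hA1 ▸ hcA)
  have hsAu := List.chain'_split.1 (hAu ▸ hcA)
  have hsBu := List.chain'_split.1 (hBu ▸ hcB)
  have hsB2 := List.chain'_split.1 (hB2 ▸ hcB)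
  refine ⟨S1 ++ x :: (M ++ y :: T2), Qa ++ u :: Pb, ?_, ?_, ?_⟩
  · apply splice_shortest E ℓ hG f hf S1 M T2 hsA1.1 ?_ hmidc hsB2.2 ?_
    · rw [← head?_append_cons, ← hA1]; exact hA.1.2.1
    · rw [← getLast?_append_cons (s := S2), ← hB2]; exact hB.1.2.2
  · apply splice2_shortest E ℓ hG f hf Qa Pb hsBu.1 ?_ hsAu.2 ?_
    · rw [← head?_append_cons, ← hBu]; exact hB.1.2.1
    · rw [← getLast?_append_cons (s := Pa), ← hAu]; exact hA.1.2.2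
  · intro z hzP hzQ
    have hz5 : z ∈ S1 ∨ z = x ∨ z ∈ M ∨ z = y ∨ z ∈ T2 := by simpa using hzP
    have hz3 : z ∈ Qa ∨ z = u ∨ z ∈ Pb := by simpa using hzQ
    have case1 : f z < f u → z ∈ A → z ≠ u ∧ z ∈ A ∧ z ∈ B := by
      intro hlt hzA
      rcases hz3 with h | rfl | h
      · exact ⟨fun he => absurd hlt (by rw [he]; exact lt_irrefl _), hzA,
          by rw [hBu]; simp [h]⟩
      · exact absurd hlt (lt_irrefl _)
      · exact absurd (lt_trans hlt (hbPu.2 z h)) (lt_irrefl _)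
    have case2 : f u < f z → z ∈ B → z ≠ u ∧ z ∈ A ∧ z ∈ B := by
      intro hlt hzB
      rcases hz3 with h | rfl | h
      · exact absurd (lt_trans hlt (hbQu.1 z h)) (lt_irrefl _)
      · exact absurd hlt (lt_irrefl _)
      · exact ⟨fun he => absurd hlt (by rw [he]; exact lt_irrefl _),
          by rw [hAu]; simp [h], hzB⟩
    rcases hz5 with h | rfl | h | rfl | h
    · exact case1 (lt_trans (hbx.1 z h) hfx) (by rw [hA1]; simp [h])
    · exact case1 hfx hxA
    · exfalso
      rcases hz3 with h3 | rfl | h3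
      · exact hmidB z h (by rw [hBu]; simp [h3])
      · exact hmidB z h huB
      · exact hmidA z h (by rw [hAu]; simp [h3])
    · exact case2 hfy hyB
    · exact case2 (lt_trans hfy (hby.2 z h)) (by rw [hB2]; simp [h])

lemma reduce (hG : NoNonposCycle E ℓ) {v w u : V} {P Q : List V} (f : V → ℕ)
    (hf : ∀ a b, SE E ℓ v w a b → f a < f b)
    (hP : IsShortestPath E ℓ P v w) (hQ : IsShortestPath E ℓ Q v w)
    (huP : u ∈ P) (huQ : u ∈ Q) (hu : u ∉ Delta E ℓ v w) :
    ∃ P' Q' : List V, IsShortestPath E ℓ P' v w ∧ IsShortestPath E ℓ Q' v w ∧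
      P'.toFinset ∩ Q'.toFinset ⊆ (P.toFinset ∩ Q.toFinset).erase u := by
  classical
  have huv : u ≠ v := fun h => hu (h ▸ (Or.inr (Set.mem_insert _ _)))
  have huw : u ≠ w := fun h => hu (h ▸ (Or.inr (Set.mem_insert_of_mem _ rfl)))
  obtain ⟨R, hR, huR⟩ := exists_avoid E ℓ ⟨P, hP.1⟩ hu
  have hPpw := pairwise_f_of_shortest E ℓ f hf hP
  have hQpw := pairwise_f_of_shortest E ℓ f hf hQ
  have hRpw := pairwise_f_of_shortest E ℓ f hf hR
  have hvR : v ∈ R := head?_mem hR.1.2.1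
  have hwR : w ∈ R := getLast?_mem hR.1.2.2
  have hvP : v ∈ P := head?_mem hP.1.2.1
  have hwP : w ∈ P := getLast?_mem hP.1.2.2
  have hfvu : f v < f u := fv_lt hP.1.2.1 hPpw huP huv
  have hfuw : f u < f w := fw_gt hP.1.2.2 hPpw huP huw
  -- choose x : the f-largest vertex of R lying on P or Q with f-value below f u
  set Sx : Finset V := R.toFinset.filter (fun z => (z ∈ P ∨ z ∈ Q) ∧ f z < f u) with hSx
  have hvSx : v ∈ Sx := by
    rw [hSx, Finset.mem_filter, List.mem_toFinset]
    exact ⟨hvR, Or.inl hvP, hfvu⟩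
  obtain ⟨x, hxSx, hxmax⟩ := Finset.exists_max_image Sx f ⟨v, hvSx⟩
  rw [hSx, Finset.mem_filter, List.mem_toFinset] at hxSx
  obtain ⟨hxR, hxPQ, hfxu⟩ := hxSx
  have hxmax' : ∀ z, z ∈ R → (z ∈ P ∨ z ∈ Q) → f z < f u → f z ≤ f x := by
    intro z h1 h2 h3
    exact hxmax z (by rw [hSx, Finset.mem_filter, List.mem_toFinset]; exact ⟨h1, h2, h3⟩)
  -- choose y : the f-smallest vertex of R lying on P or Q with f-value above f u
  set Sy : Finset V := R.toFinset.filter (fun z => (z ∈ P ∨ z ∈ Q) ∧ f u < f z) with hSy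
  have hwSy : w ∈ Sy := by
    rw [hSy, Finset.mem_filter, List.mem_toFinset]
    exact ⟨hwR, Or.inl hwP, hfuw⟩
  obtain ⟨y, hySy, hymin⟩ := Finset.exists_min_image Sy f ⟨w, hwSy⟩
  rw [hSy, Finset.mem_filter, List.mem_toFinset] at hySy
  obtain ⟨hyR, hyPQ, hfuy⟩ := hySy
  have hymin' : ∀ z, z ∈ R → (z ∈ P ∨ z ∈ Q) → f u < f z → f y ≤ f z := by
    intro z h1 h2 h3
    exact hymin z (by rw [hSy, Finset.mem_filter, List.mem_toFinset]; exact ⟨h1, h2, h3⟩)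
  have hfxy : f x < f y := lt_trans hfxu hfuy
  -- split R at x, then at y
  obtain ⟨U1, V1, hR1⟩ := List.append_of_mem hxR
  have hyV1 : y ∈ V1 := by
    have : y ∈ U1 ++ x :: V1 := hR1 ▸ hyR
    rcases List.mem_append.1 this with h | h
    · exact absurd ((pairwise_split_bounds hRpw hR1).1 y h)
        (not_lt.2 (le_of_lt hfxy))
    · rcases List.mem_cons.1 h with h' | h'
      · exact absurd (h' ▸ hfxy) (lt_irrefl _)
      · exact h'
  obtain ⟨M, U2, hV1⟩ := List.append_of_mem hyV1
  have hRdec : R = U1 ++ x :: (M ++ y :: U2) := by rw [hR1, hV1]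
  -- the middle segment is an SE-chain from x to y
  have hcR := chain'_SE E ℓ hR
  have hmidc : ((x :: M) ++ [y]).Chain' (SE E ℓ v w) := by
    have h1 := (List.chain'_split (l₁ := U1)).1 (hRdec ▸ hcR)
    have h2 : ((x :: M) ++ y :: U2).Chain' (SE E ℓ v w) := by
      have := h1.2
      rwa [show (x :: (M ++ y :: U2) : List V) = (x :: M) ++ y :: U2 by simp] at this
    exact (List.chain'_split (l₁ := x :: M)).1 h2 |>.1
  -- f-bounds for the middle segment
  have hmidf : ∀ z ∈ M, f x < f z ∧ f z < f y := by
    intro z hz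
    constructor
    · exact (pairwise_split_bounds hRpw hRdec).2 z (by simp [hz])
    · have hpw2 : (x :: (M ++ y :: U2)).Pairwise (fun a b => f a < f b) :=
        ((List.pairwise_append.1 (hRdec ▸ hRpw)).2.1)
      have hpw3 : (M ++ y :: U2).Pairwise (fun a b => f a < f b) :=
        (List.pairwise_cons.1 hpw2).2
      exact (pairwise_split_bounds hpw3 rfl).1 z hz
  -- the middle segment avoids P and Q entirely
  have hmidPQ : ∀ z ∈ M, ¬(z ∈ P ∨ z ∈ Q) := by
    intro z hz hzPQ
    have hzR : z ∈ R := by rw [hRdec]; simp [hz]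
    rcases lt_trichotomy (f z) (f u) with h | h | h
    · exact absurd (hxmax' z hzR hzPQ h) (not_le.2 (hmidf z hz).1)
    · have hzu : z = u := by
        rcases hzPQ with hzP | hzQ
        · exact f_inj_on hPpw z hzP u huP h
        · exact f_inj_on hQpw z hzQ u huQ h
      exact huR (hzu ▸ hzR)
    · exact absurd (hymin' z hzR hzPQ h) (not_le.2 (hmidf z hz).2)
  have hconc : ∀ P' Q' : List V, IsShortestPath E ℓ P' v w → IsShortestPath E ℓ Q' v w →
      (∀ z, z ∈ P' → z ∈ Q' → z ≠ u ∧ z ∈ P ∧ z ∈ Q) →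
      ∃ P' Q' : List V, IsShortestPath E ℓ P' v w ∧ IsShortestPath E ℓ Q' v w ∧
        P'.toFinset ∩ Q'.toFinset ⊆ (P.toFinset ∩ Q.toFinset).erase u := by
    intro P' Q' h1 h2 h3
    refine ⟨P', Q', h1, h2, ?_⟩
    intro z hz
    rw [Finset.mem_inter, List.mem_toFinset, List.mem_toFinset] at hz
    obtain ⟨hne, hzP, hzQ⟩ := h3 z hz.1 hz.2
    rw [Finset.mem_erase, Finset.mem_inter, List.mem_toFinset, List.mem_toFinset]
    exact ⟨hne, hzP, hzQ⟩
  rcases hxPQ with hxP | hxQ <;> rcases hyPQ with hyP | hyQ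
  · obtain ⟨P', Q', h1, h2, h3⟩ := caseAA E ℓ hG f hf hP hQ hxP hyP hmidc
      (fun z hz hzB => hmidPQ z hz (Or.inr hzB)) hfxu hfuy
    exact hconc P' Q' h1 h2 h3
  · obtain ⟨P', Q', h1, h2, h3⟩ := caseAB E ℓ hG f hf hP hQ hxP hyQ huP huQ hmidc
      (fun z hz hzA => hmidPQ z hz (Or.inl hzA))
      (fun z hz hzB => hmidPQ z hz (Or.inr hzB)) hfxu hfuy
    exact hconc P' Q' h1 h2 h3
  · obtain ⟨P', Q', h1, h2, h3⟩ := caseAB E ℓ hG f hf hQ hP hxQ hyP huQ huP hmidc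
      (fun z hz hzA => hmidPQ z hz (Or.inr hzA))
      (fun z hz hzB => hmidPQ z hz (Or.inl hzB)) hfxu hfuy
    exact hconc P' Q' h1 h2 (fun z a b => ⟨(h3 z a b).1, (h3 z a b).2.2, (h3 z a b).2.1⟩)
  · obtain ⟨P', Q', h1, h2, h3⟩ := caseAA E ℓ hG f hf hQ hP hxQ hyQ hmidc
      (fun z hz hzB => hmidPQ z hz (Or.inl hzB)) hfxu hfuy
    exact hconc P' Q' h1 h2 (fun z a b => ⟨(h3 z a b).1, (h3 z a b).2.2, (h3 z a b).2.1⟩)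

end Aux

/-- For any vertices `v, w` joined by at least one path,
there exist two shortest paths from `v` to `w` intersecting only at
`(v, w)`-distance-critical vertices (and the endpoints). -/
theorem exists_shortest_paths_meeting_only_in_critical
    (hG : NoNonposCycle E ℓ) (v w : V)
    (hreach : ∃ p : List V, IsPathFrom E p v w) :
    ∃ P Q : List V, IsShortestPath E ℓ P v w ∧ IsShortestPath E ℓ Q v w ∧
      ∀ u, u ∈ P → u ∈ Q → u ∈ Delta E ℓ v w := by
  classical
  by_cases hvw : v = w
  · subst hvw
    have hP : IsShortestPath E ℓ [v] v v := by
      refine ⟨⟨⟨by simp, by simp, by simp⟩, rfl, rfl⟩, ?_⟩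
      rw [pathWeight_singleton, dist_self]
    refine ⟨[v], [v], hP, hP, ?_⟩
    intro u hu _
    rw [List.mem_singleton] at hu
    exact Or.inr (by simp [hu])
  · obtain ⟨P0, hP0⟩ := exists_shortest E ℓ hreach
    set f : V → ℕ := fun z => Set.ncard {y | Relation.TransGen (SE E ℓ v w) y z} with hfdef
    have hf : ∀ a b, SE E ℓ v w a b → f a < f b := by
      intro a b hab
      apply Set.ncard_lt_ncard _ (Set.toFinite _)
      rw [Set.ssubset_def]
      constructor
      · intro z hz; exact Relation.TransGen.tail hz hab
      · intro hsub
        exact SE_no_closed E ℓ hG (hsub (Relation.TransGen.single hab))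
    suffices h : ∀ n (P Q : List V), IsShortestPath E ℓ P v w → IsShortestPath E ℓ Q v w →
        (P.toFinset ∩ Q.toFinset).card ≤ n →
        ∃ P' Q' : List V, IsShortestPath E ℓ P' v w ∧ IsShortestPath E ℓ Q' v w ∧
          ∀ u, u ∈ P' → u ∈ Q' → u ∈ Delta E ℓ v w by
      exact h _ P0 P0 hP0 hP0 le_rfl
    intro n
    induction n with
    | zero =>
      intro P Q hP hQ hcard
      refine ⟨P, Q, hP, hQ, ?_⟩
      intro z h1 h2
      exfalso
      have hmem : z ∈ P.toFinset ∩ Q.toFinset := by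
        rw [Finset.mem_inter, List.mem_toFinset, List.mem_toFinset]; exact ⟨h1, h2⟩
      have := Finset.card_pos.2 ⟨z, hmem⟩
      omega
    | succ n ih =>
      intro P Q hP hQ hcard
      by_cases hgood : ∀ z, z ∈ P → z ∈ Q → z ∈ Delta E ℓ v w
      · exact ⟨P, Q, hP, hQ, hgood⟩
      · push_neg at hgood
        obtain ⟨z, hzP, hzQ, hzD⟩ := hgood
        obtain ⟨P', Q', hP', hQ', hsub⟩ := reduce E ℓ hG f hf hP hQ hzP hzQ hzD
        apply ih P' Q' hP' hQ'
        have h1 := Finset.card_le_card hsub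
        have h2 : z ∈ P.toFinset ∩ Q.toFinset := by
          rw [Finset.mem_inter, List.mem_toFinset, List.mem_toFinset]; exact ⟨hzP, hzQ⟩
        have h3 := Finset.card_erase_lt_of_mem h2
        omega

end DSP
end
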